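/- Let q = (2e+1)·t with integers e ≥ 0 and t ≥ 2, and set d1 = gcd(2e+1, t). The assignment k ↦ LC_q(e,k) maps the integers onto the set of all additive subgroups of Z_q^2 that are perfect e-codes of type 2, and LC_q(e,k1) = LC_q(e,k2) if and only if k1 ≡ k2 (mod d1). In particular, the number of additive subgroups of Z_q^2 that are perfect e-codes of type 2 is exactly d1. -/

import Mathlib

/-- Lee distance on `ZMod q`. -/
def leeDist {q : ℕ} (x y : ZMod q) : ℕ := min (x - y).val (q - (x - y).val)

/-- Maximum (Chebyshev) distance on `(ZMod q)^n`. -/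
def maxDist {q n : ℕ} (x y : Fin n → ZMod q) : ℕ :=
  Finset.univ.sup fun i => leeDist (x i) (y i)

/-- `C` is a perfect `e`-code: every point is within distance `e` of exactly one codeword. -/
def IsPerfectCode {q n : ℕ} (e : ℕ) (C : Set (Fin n → ZMod q)) : Prop :=
  ∀ x : Fin n → ZMod q, ∃! c, c ∈ C ∧ maxDist x c ≤ e

/-- `C ⊆ (ZMod q)^n` is a code of type `i`: translation by `(2e+1)·e_i` preserves `C`. -/
def IsTypeCode {q n : ℕ} (e : ℕ) (C : Set (Fin n → ZMod q)) (i : Fin n) : Prop :=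
  ∀ c ∈ C, c + Pi.single i ((2 * e + 1 : ℕ) : ZMod q) ∈ C

/-- `LC_q(e,k)`: the additive subgroup of `(ZMod q)^2` generated by
`(2e+1, k·h1)` and `(0, 2e+1)`, where `h1 = (2e+1)/gcd(2e+1,t)`. -/
def LCcode (q e t : ℕ) (k : ℤ) : AddSubgroup (Fin 2 → ZMod q) :=
  AddSubgroup.closure
    { ![((2 * e + 1 : ℕ) : ZMod q),
        ((k * (((2 * e + 1) / Nat.gcd (2 * e + 1) t : ℕ) : ℤ) : ℤ) : ZMod q)],
      ![(0 : ZMod q), ((2 * e + 1 : ℕ) : ZMod q)] }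




lemma leeDist_congr {q : ℕ} {x y x' y' : ZMod q} (h : x - y = x' - y') :
    leeDist x y = leeDist x' y' := by unfold leeDist; rw [h]

lemma leeDist_self {q : ℕ} (x : ZMod q) : leeDist x x = 0 := by
  simp [leeDist]

lemma maxDist_self_le {q n : ℕ} (x : Fin n → ZMod q) (e : ℕ) : maxDist x x ≤ e :=
  Finset.sup_le fun i _ => by simp [leeDist_self]

private lemma mod_cases (x q : ℕ) (h : x < 2*q) (hq : 0 < q) : x % q = x ∨ x % q = x - q := by
  rcases lt_or_ge x q with h' | h'
  · exact Or.inl (Nat.mod_eq_of_lt h')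
  · right; rw [Nat.mod_eq_sub_mod h']; exact Nat.mod_eq_of_lt (by omega)

lemma lee_neg {q : ℕ} [NeZero q] (u : ZMod q) : leeDist (-u) 0 = leeDist u 0 := by
  by_cases h : u = 0
  · simp [h]
  · haveI : NeZero u := ⟨h⟩
    have hv := ZMod.val_lt u
    have hv0 : u.val ≠ 0 := fun hh => h ((ZMod.val_eq_zero u).mp hh)
    simp only [leeDist, sub_zero, ZMod.val_neg_of_ne_zero]
    omega

lemma lee_sub_le {q : ℕ} [NeZero q] (u v : ZMod q) :
    leeDist (u - v) 0 ≤ leeDist u 0 + leeDist v 0 := by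
  by_cases h : v = 0
  · simp [h, leeDist]
  · haveI : NeZero v := ⟨h⟩
    have hu := ZMod.val_lt u
    have hvlt := ZMod.val_lt v
    have hv0 : v.val ≠ 0 := fun hh => h ((ZMod.val_eq_zero v).mp hh)
    have e1 : (u - v).val = (u.val + (q - v.val)) % q := by
      rw [sub_eq_add_neg, ZMod.val_add, ZMod.val_neg_of_ne_zero]
    have := mod_cases (u.val + (q - v.val)) q (by omega) (NeZero.pos q)
    simp only [leeDist, sub_zero]
    omega

lemma lee_natCast_le {q : ℕ} [NeZero q] (w : ℕ) (hw : w < q) :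
    leeDist ((w : ZMod q)) 0 ≤ w := by
  simp [leeDist, ZMod.val_cast_of_lt hw]

lemma lee_triangle {q : ℕ} [NeZero q] (x u v : ZMod q) :
    leeDist u v ≤ leeDist x u + leeDist x v := by
  have h1 : leeDist u v = leeDist ((x - v) - (x - u)) 0 := leeDist_congr (by ring)
  have h2 : leeDist (x - u) 0 = leeDist x u := leeDist_congr (by ring)
  have h3 : leeDist (x - v) 0 = leeDist x v := leeDist_congr (by ring)
  rw [h1, ← h2, ← h3]
  exact (lee_sub_le _ _).trans (by omega)


lemma cover {q : ℕ} [NeZero q] (e t : ℕ) (hq : q = (2*e+1)*t) (ht : 1 ≤ t) (x : ZMod q) :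
    ∃ a : ℤ, leeDist x ((a * (2*e+1) : ℤ) : ZMod q) ≤ e := by
  have hmq : 2*e+1 ≤ q := by
    rw [hq]; exact Nat.le_mul_of_pos_right _ ht
  have hx : x = ((x.val : ℤ) : ZMod q) := by
    rw [Int.cast_natCast, ZMod.natCast_val, ZMod.cast_id]
  set a0 := x.val / (2*e+1) with ha0
  set r := x.val % (2*e+1) with hr
  have hdm : x.val = a0 * (2*e+1) + r := by rw [ha0, hr, mul_comm]; exact (Nat.div_add_mod _ _).symm
  have hdmz : (x.val : ℤ) = (a0 : ℤ) * (2*e+1) + (r : ℤ) := by exact_mod_cast hdm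
  have hrlt : r < 2*e+1 := Nat.mod_lt _ (by omega)
  have hdmz' : x = ((((a0 : ℤ) * (2*e+1) + (r : ℤ)) : ℤ) : ZMod q) := by rw [← hdmz, ← hx]
  rcases le_or_gt r e with hre | hre
  · refine ⟨(a0 : ℕ), ?_⟩
    have hdiff : x - (((a0 : ℕ) * (2*e+1) : ℤ) : ZMod q) = ((r : ℕ) : ZMod q) - 0 := by
      rw [hdmz']; push_cast; ring
    rw [leeDist_congr hdiff]
    exact (lee_natCast_le r (by omega)).trans hre
  · refine ⟨(a0 : ℕ) + 1, ?_⟩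
    have hdiff : x - ((((a0:ℕ) + 1) * (2*e+1) : ℤ) : ZMod q) = -(((2*e+1-r : ℕ)) : ZMod q) - 0 := by
      rw [hdmz', Nat.cast_sub (by omega : r ≤ 2*e+1)]
      push_cast; ring
    rw [leeDist_congr hdiff, lee_neg]
    exact (lee_natCast_le _ (by omega)).trans (by omega)


lemma small_mult {q : ℕ} [NeZero q] (e t : ℕ) (hq : q = (2*e+1)*t) (x : ZMod q)
    (hd : (2*e+1) ∣ x.val) (hle : leeDist x 0 ≤ 2*e) : x = 0 := by
  have hvlt := ZMod.val_lt x
  simp only [leeDist, sub_zero] at hle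
  have hmq : (2*e+1) ∣ q := ⟨t, hq⟩
  have hsub : (2*e+1) ∣ (q - x.val) := Nat.dvd_sub hmq hd
  rw [← ZMod.val_eq_zero]
  by_contra hne
  have h1 : 2*e+1 ≤ x.val := Nat.le_of_dvd (Nat.pos_of_ne_zero hne) hd
  have h2 : 2*e+1 ≤ q - x.val := Nat.le_of_dvd (by omega) hsub
  omega

lemma dvd_val_intCast {q : ℕ} [NeZero q] (m : ℕ) (hmq : (m:ℤ) ∣ (q:ℤ)) (z : ℤ)
    (hz : (m:ℤ) ∣ z) : m ∣ ((z : ZMod q)).val := by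
  have h1 : (((z : ZMod q)).val : ℤ) = z % q := ZMod.val_intCast z
  have h2 : (m:ℤ) ∣ z % q := by
    rw [Int.emod_def]
    exact dvd_sub hz (Dvd.dvd.mul_right hmq _)
  rw [← h1] at h2
  exact_mod_cast h2


lemma mem_LCcode {q e t : ℕ} {k : ℤ} {x : Fin 2 → ZMod q} :
    x ∈ LCcode q e t k ↔ ∃ a b : ℤ,
      x 0 = ((a * (2*e+1) : ℤ) : ZMod q) ∧
      x 1 = ((a * (k * (((2*e+1) / Nat.gcd (2*e+1) t : ℕ) : ℤ)) + b * (2*e+1) : ℤ) : ZMod q) := by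
  rw [LCcode, AddSubgroup.mem_closure_pair]
  constructor
  · rintro ⟨a, b, rfl⟩
    refine ⟨a, b, ?_, ?_⟩ <;>
      simp [Pi.smul_apply, zsmul_eq_mul] <;> push_cast <;> ring
  · rintro ⟨a, b, h0, h1⟩
    refine ⟨a, b, ?_⟩
    funext i
    fin_cases i <;>
      simp [Pi.smul_apply, zsmul_eq_mul, h0, h1] <;> push_cast <;> ring


lemma gcd_identity (m t : ℕ) : t * (m / Nat.gcd m t) = m * (t / Nat.gcd m t) := by
  rw [← Nat.mul_div_assoc t (Nat.gcd_dvd_left m t), ← Nat.mul_div_assoc m (Nat.gcd_dvd_right m t),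
    mul_comm t m]

lemma LC_packing {e t q : ℕ} (hq : q = (2*e+1)*t) [NeZero q] {k : ℤ}
    {c : Fin 2 → ZMod q} (hc : c ∈ LCcode q e t k)
    (h0 : leeDist (c 0) 0 ≤ 2*e) (h1 : leeDist (c 1) 0 ≤ 2*e) : c = 0 := by
  obtain ⟨a, b, ha, hb⟩ := mem_LCcode.mp hc
  have hmq : ((2*e+1 : ℕ) : ℤ) ∣ (q : ℤ) := ⟨t, by exact_mod_cast hq⟩
  have hd0 : (2*e+1) ∣ (c 0).val := by
    rw [ha]; exact dvd_val_intCast (2*e+1) hmq _ ⟨a, by push_cast; ring⟩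
  have hc0 : c 0 = 0 := small_mult e t hq _ hd0 h0
  have hqd : ((q : ℕ) : ℤ) ∣ a * (2*e+1) := by
    rw [ha] at hc0
    exact_mod_cast (ZMod.intCast_zmod_eq_zero_iff_dvd _ q).mp hc0
  have hta : (t : ℤ) ∣ a := by
    have hqz : ((q : ℕ) : ℤ) = ((2*e+1 : ℕ) : ℤ) * (t : ℤ) := by exact_mod_cast hq
    rw [hqz] at hqd
    have h' : ((2*e+1:ℕ):ℤ) * (t : ℤ) ∣ ((2*e+1:ℕ):ℤ) * a := by
      rwa [mul_comm a _] at hqd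
    exact (mul_dvd_mul_iff_left (by positivity : ((2*e+1:ℕ):ℤ) ≠ 0)).mp h'
  obtain ⟨a', rfl⟩ := hta
  have hth : ((t * ((2*e+1) / Nat.gcd (2*e+1) t) : ℕ) : ℤ)
      = (((2*e+1) * (t / Nat.gcd (2*e+1) t) : ℕ) : ℤ) := by
    exact_mod_cast congrArg (Nat.cast : ℕ → ℤ) (gcd_identity (2*e+1) t)
  have hd1 : (2*e+1) ∣ (c 1).val := by
    rw [hb]
    refine dvd_val_intCast (2*e+1) hmq _ ⟨a' * k * ((t / Nat.gcd (2*e+1) t : ℕ) : ℤ) + b, ?_⟩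
    have step : ((t:ℤ) * a') * (k * (((2*e+1) / Nat.gcd (2*e+1) t : ℕ) : ℤ)) + b * (2*e+1)
        = a' * k * (((t * ((2*e+1) / Nat.gcd (2*e+1) t) : ℕ) : ℤ)) + b * (2*e+1) := by
      push_cast; ring
    rw [step, hth]; push_cast; ring
  have hc1 : c 1 = 0 := small_mult e t hq _ hd1 h1
  funext i
  fin_cases i
  · exact hc0
  · exact hc1



lemma le_maxDist {q n : ℕ} (x y : Fin n → ZMod q) (i : Fin n) :
    leeDist (x i) (y i) ≤ maxDist x y :=
  Finset.le_sup (f := fun j => leeDist (x j) (y j)) (Finset.mem_univ i)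

lemma LC_perfect {e t q : ℕ} (ht : 2 ≤ t) (hq : q = (2*e+1)*t) [NeZero q] (k : ℤ) :
    IsPerfectCode e ((LCcode q e t k : AddSubgroup (Fin 2 → ZMod q)) : Set (Fin 2 → ZMod q)) := by
  intro x
  obtain ⟨a, ha⟩ := cover e t hq (by omega) (x 0)
  obtain ⟨b, hb⟩ := cover e t hq (by omega)
    (x 1 - ((a * (k * (((2*e+1) / Nat.gcd (2*e+1) t : ℕ) : ℤ)) : ℤ) : ZMod q))
  set c : Fin 2 → ZMod q :=
    ![((a * (2*e+1) : ℤ) : ZMod q),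
      ((a * (k * (((2*e+1) / Nat.gcd (2*e+1) t : ℕ) : ℤ)) + b * (2*e+1) : ℤ) : ZMod q)] with hc
  have hc0 : c 0 = ((a * (2*e+1) : ℤ) : ZMod q) := by simp [hc]
  have hc1 : c 1 = ((a * (k * (((2*e+1) / Nat.gcd (2*e+1) t : ℕ) : ℤ)) + b * (2*e+1) : ℤ) : ZMod q) := by
    simp [hc]
  have hcmem : c ∈ LCcode q e t k := mem_LCcode.mpr ⟨a, b, hc0, hc1⟩
  have hd0 : leeDist (x 0) (c 0) ≤ e := by rw [hc0]; exact ha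
  have hd1 : leeDist (x 1) (c 1) ≤ e := by
    have hdiff : x 1 - c 1
        = (x 1 - ((a * (k * (((2*e+1) / Nat.gcd (2*e+1) t : ℕ) : ℤ)) : ℤ) : ZMod q))
          - ((b * (2*e+1) : ℤ) : ZMod q) := by
      rw [hc1]; push_cast; ring
    rw [leeDist_congr hdiff]; exact hb
  have hclose : maxDist x c ≤ e := by
    apply Finset.sup_le
    intro i _
    fin_cases i
    · exact hd0
    · exact hd1
  refine ⟨c, ⟨hcmem, hclose⟩, ?_⟩
  rintro c' ⟨hc'mem, hc'close⟩
  have hdiffmem : c' - c ∈ LCcode q e t k := sub_mem hc'mem hcmem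
  have key : ∀ i : Fin 2, leeDist ((c' - c) i) 0 ≤ 2*e := by
    intro i
    have h1 : leeDist (x i) (c i) ≤ e := le_trans (le_maxDist x c i) hclose
    have h2 : leeDist (x i) (c' i) ≤ e := le_trans (le_maxDist x c' i) hc'close
    have h3 : leeDist ((c' - c) i) 0 = leeDist (c' i) (c i) := leeDist_congr (by simp)
    rw [h3]
    exact le_trans (lee_triangle (x i) (c' i) (c i)) (by omega)
  exact sub_eq_zero.mp (LC_packing hq hdiffmem (key 0) (key 1))

lemma single_eq {q e : ℕ} :
    (Pi.single 1 ((2 * e + 1 : ℕ) : ZMod q) : Fin 2 → ZMod q)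
      = ![(0 : ZMod q), ((2 * e + 1 : ℕ) : ZMod q)] := by
  funext i
  fin_cases i
  · simp [Pi.single_apply]
  · simp [Pi.single_apply]

section Classify

variable {e t q : ℕ}

lemma classify (ht : 2 ≤ t) (hq : q = (2*e+1)*t) [NeZero q]
    (C : AddSubgroup (Fin 2 → ZMod q))
    (hP : IsPerfectCode e (C : Set (Fin 2 → ZMod q)))
    (hT : IsTypeCode e (C : Set (Fin 2 → ZMod q)) 1) :
    ∃ k : ℤ, C = LCcode q e t k := by
  have hq4 : 4*e + 2 ≤ q := by
    calc 4*e+2 = (2*e+1)*2 := by ring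
    _ ≤ (2*e+1)*t := Nat.mul_le_mul_left _ ht
    _ = q := hq.symm
  -- (0, m) ∈ C
  have h0m : ![(0 : ZMod q), ((2*e+1 : ℕ) : ZMod q)] ∈ C := by
    have := hT 0 C.zero_mem
    rwa [zero_add, single_eq] at this
  -- (0, b*m) ∈ C
  have hbm : ∀ b : ℤ, ![(0 : ZMod q), ((b * (2*e+1) : ℤ) : ZMod q)] ∈ C := by
    intro b
    have hmem := AddSubgroup.zsmul_mem C h0m b
    have : b • ![(0 : ZMod q), ((2*e+1 : ℕ) : ZMod q)]
        = ![(0 : ZMod q), ((b * (2*e+1) : ℤ) : ZMod q)] := by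
      funext i
      fin_cases i
      · simp
      · simp [zsmul_eq_mul]; push_cast; ring
    rwa [this] at hmem
  -- claim B aux
  have claimB_aux : ∀ c, c ∈ C → (c 0).val ≤ 2*e → c 0 = 0 := by
    intro c hc hv
    obtain ⟨b, hb⟩ := cover e t hq (by omega) (c 1)
    set v := (c 0).val with hvdef
    set x0 : ℕ := v - e with hx0
    have hx0e : x0 ≤ e := by omega
    set x : Fin 2 → ZMod q := ![((x0 : ℕ) : ZMod q), c 1] with hx
    have hxc : maxDist x c ≤ e := by
      apply Finset.sup_le
      intro i _
      fin_cases i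
      · show leeDist ((x0 : ZMod q)) (c 0) ≤ e
        have hc0 : c 0 = ((v : ℕ) : ZMod q) := by
          rw [hvdef, ZMod.natCast_val, ZMod.cast_id]
        have hdiff : ((x0 : ℕ) : ZMod q) - c 0 = -(((v - x0 : ℕ)) : ZMod q) - 0 := by
          rw [hc0, Nat.cast_sub (by omega : x0 ≤ v)]
          ring
        rw [leeDist_congr hdiff, lee_neg]
        exact le_trans (lee_natCast_le _ (by omega)) (by omega)
      · show leeDist (c 1) (c 1) ≤ e
        simp [leeDist_self]
    have hxc'' : maxDist x ![(0 : ZMod q), ((b * (2*e+1) : ℤ) : ZMod q)] ≤ e := by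
      apply Finset.sup_le
      intro i _
      fin_cases i
      · show leeDist ((x0 : ZMod q)) 0 ≤ e
        exact le_trans (lee_natCast_le _ (by omega)) hx0e
      · show leeDist (c 1) (((b * (2*e+1) : ℤ) : ZMod q)) ≤ e
        exact hb
    obtain ⟨u, _, huniq⟩ := hP x
    have h1 := huniq c ⟨hc, hxc⟩
    have h2 := huniq _ ⟨hbm b, hxc''⟩
    have : c = ![(0 : ZMod q), ((b * (2*e+1) : ℤ) : ZMod q)] := h1.trans h2.symm
    have := congrFun this 0
    simpa using this
  -- claim B
  have claimB : ∀ c, c ∈ C → leeDist (c 0) 0 ≤ 2*e → c 0 = 0 := by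
    intro c hc hle
    by_cases h0 : c 0 = 0
    · exact h0
    · have hvlt := ZMod.val_lt (c 0)
      have hv0 : (c 0).val ≠ 0 := fun hh => h0 ((ZMod.val_eq_zero _).mp hh)
      simp only [leeDist, sub_zero] at hle
      rcases le_or_gt (c 0).val (2*e) with h | h
      · exact claimB_aux c hc h
      · have hneg : (-c) 0 = 0 := by
          apply claimB_aux (-c) (neg_mem hc)
          have : (-c) 0 = -(c 0) := rfl
          rw [this]
          haveI : NeZero (c 0) := ⟨h0⟩
          rw [ZMod.val_neg_of_ne_zero]
          omega
        have : (-c) 0 = -(c 0) := rfl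
        rw [this, neg_eq_zero] at hneg
        exact hneg
  -- claim B'
  have claimB' : ∀ c, c ∈ C → c 0 = 0 → ∃ b : ℤ, c 1 = ((b * (2*e+1) : ℤ) : ZMod q) := by
    intro c hc h0
    obtain ⟨b, hb⟩ := cover e t hq (by omega) (c 1)
    refine ⟨b, ?_⟩
    set c'' : Fin 2 → ZMod q := ![(0 : ZMod q), ((b * (2*e+1) : ℤ) : ZMod q)] with hc''def
    have hdmem : c - c'' ∈ C := sub_mem hc (hbm b)
    obtain ⟨u, _, huniq⟩ := hP (c - c'')
    have h1 := huniq (c - c'') ⟨hdmem, maxDist_self_le _ e⟩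
    have h2 : maxDist (c - c'') 0 ≤ e := by
      apply Finset.sup_le
      intro i _
      fin_cases i
      · show leeDist ((c - c'') 0) 0 ≤ e
        have : (c - c'') 0 = 0 := by
          show c 0 - c'' 0 = 0
          rw [h0]; simp [hc''def]
        rw [this]; simp [leeDist_self]
      · show leeDist ((c - c'') 1) 0 ≤ e
        have hdiff : (c - c'') 1 - 0 = c 1 - ((b * (2*e+1) : ℤ) : ZMod q) := by
          show c 1 - c'' 1 - 0 = _
          simp [hc''def]
        rw [leeDist_congr hdiff]
        exact hb
    have h3 := huniq 0 ⟨C.zero_mem, h2⟩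
    have hz : c - c'' = 0 := h1.trans h3.symm
    have := congrFun (sub_eq_zero.mp hz) 1
    simpa [hc''def] using this
  -- find a codeword with first coordinate (2e+1)
  obtain ⟨c, ⟨hcC, hcd⟩, -⟩ := hP ![(((e+1 : ℕ)) : ZMod q), (0 : ZMod q)]
  have hx0val : (((e+1 : ℕ)) : ZMod q).val = e+1 := ZMod.val_cast_of_lt (by omega)
  have hled : leeDist (((e+1 : ℕ)) : ZMod q) (c 0) ≤ e := by
    have := le_maxDist ![(((e+1 : ℕ)) : ZMod q), (0 : ZMod q)] c 0
    simpa using le_trans this hcd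
  have hne : c 0 ≠ 0 := by
    intro h
    rw [h] at hled
    simp only [leeDist, sub_zero, hx0val] at hled
    omega
  have hbig : ¬ (min (c 0).val (q - (c 0).val) ≤ 2*e) := by
    intro hcon
    exact hne (claimB c hcC (by simp only [leeDist, sub_zero]; exact hcon))
  set w := ((((e+1 : ℕ)) : ZMod q) - c 0).val with hwdef
  have hwlt : w < q := ZMod.val_lt _
  have hwsmall : min w (q - w) ≤ e := hled
  have hc0eq : c 0 = (((e+1 : ℤ) - (w : ℤ) : ℤ) : ZMod q) := by
    have h1 : c 0 = (((e+1 : ℕ)) : ZMod q) - ((((e+1 : ℕ)) : ZMod q) - c 0) := by ring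
    have h2 : (((e+1 : ℕ)) : ZMod q) - c 0 = ((w : ℕ) : ZMod q) := by
      rw [hwdef, ZMod.natCast_val, ZMod.cast_id]
    rw [h1, h2]
    push_cast
    ring
  have hVz : (((c 0).val : ℤ)) = ((e+1 : ℤ) - (w : ℤ)) % q := by
    rw [hc0eq, ZMod.val_intCast]
  have hVlt : (c 0).val < q := ZMod.val_lt _
  have hmodsplit : ((e+1 : ℤ) - (w : ℤ)) % q = ((e+1 : ℤ) - (w : ℤ))
      ∨ ((e+1 : ℤ) - (w : ℤ)) % q = ((e+1 : ℤ) - (w : ℤ)) + q := by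
    rcases le_or_gt 0 ((e+1 : ℤ) - (w : ℤ)) with hz | hz
    · left; exact Int.emod_eq_of_lt hz (by omega)
    · right
      rw [← Int.add_emod_right]
      exact Int.emod_eq_of_lt (by omega) (by omega)
  have hV : (c 0).val = 2*e+1 := by
    have hb2 : 2*e < (c 0).val ∧ 2*e < q - (c 0).val := lt_min_iff.mp (not_le.mp hbig)
    have hw2 : w ≤ e ∨ q - w ≤ e := min_le_iff.mp hwsmall
    omega
  have hc0m : c 0 = ((2*e+1 : ℕ) : ZMod q) := by
    have h1 : c 0 = (((c 0).val : ℕ) : ZMod q) := by rw [ZMod.natCast_val, ZMod.cast_id]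
    rw [h1, hV]
  -- second coordinate of c is a multiple of (2e+1)/d
  have htc : (t : ℤ) • c ∈ C := AddSubgroup.zsmul_mem C hcC (t : ℤ)
  have htc0 : ((t : ℤ) • c) 0 = 0 := by
    show (t : ℤ) • (c 0) = 0
    rw [zsmul_eq_mul, hc0m]
    have h1 : ((t : ℤ) : ZMod q) * ((2*e+1 : ℕ) : ZMod q) = ((t * (2*e+1) : ℕ) : ZMod q) := by
      push_cast; ring
    rw [h1, show t * (2*e+1) = q by rw [hq, mul_comm], ZMod.natCast_self]
  obtain ⟨b, hb⟩ := claimB' ((t : ℤ) • c) htc htc0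
  have htc1 : ((t : ℤ) • c) 1 = (((t * (c 1).val : ℕ) : ℤ) : ZMod q) := by
    show (t : ℤ) • (c 1) = _
    rw [zsmul_eq_mul]
    have h1 : c 1 = (((c 1).val : ℕ) : ZMod q) := by rw [ZMod.natCast_val, ZMod.cast_id]
    conv_lhs => rw [h1]
    push_cast; ring
  have hdvd1 : ((q : ℕ) : ℤ) ∣ (b * (2*e+1) - (t * (c 1).val : ℕ)) := by
    rw [htc1] at hb
    have := (ZMod.intCast_eq_intCast_iff _ _ _).mp hb
    exact Int.ModEq.dvd this
  have hdvd2 : ((2*e+1 : ℕ) : ℤ) ∣ ((t * (c 1).val : ℕ) : ℤ) := by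
    have hmq : ((2*e+1 : ℕ) : ℤ) ∣ ((q : ℕ) : ℤ) := ⟨t, by exact_mod_cast hq⟩
    have h1 : ((2*e+1 : ℕ) : ℤ) ∣ (b * (2*e+1) - (t * (c 1).val : ℕ)) :=
      dvd_trans hmq hdvd1
    have h2 : ((2*e+1 : ℕ) : ℤ) ∣ b * (2*e+1) := ⟨b, by push_cast; ring⟩
    have h3 := dvd_sub h2 h1
    rwa [sub_sub_cancel] at h3
  have hdvd3 : (2*e+1) ∣ t * (c 1).val := by exact_mod_cast hdvd2
  have hd0 : 0 < Nat.gcd (2*e+1) t := Nat.gcd_pos_of_pos_left t (by omega)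
  have hmd : Nat.gcd (2*e+1) t ∣ 2*e+1 := Nat.gcd_dvd_left _ _
  have htd : Nat.gcd (2*e+1) t ∣ t := Nat.gcd_dvd_right _ _
  have key : (2*e+1)/Nat.gcd (2*e+1) t ∣ (c 1).val := by
    have h1 : Nat.gcd (2*e+1) t * ((2*e+1)/Nat.gcd (2*e+1) t)
        ∣ Nat.gcd (2*e+1) t * ((t/Nat.gcd (2*e+1) t) * (c 1).val) := by
      rw [Nat.mul_div_cancel' hmd, ← mul_assoc, Nat.mul_div_cancel' htd]
      exact hdvd3
    have h2 : (2*e+1)/Nat.gcd (2*e+1) t ∣ (t/Nat.gcd (2*e+1) t) * (c 1).val :=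
      (Nat.mul_dvd_mul_iff_left hd0).mp h1
    exact (Nat.coprime_div_gcd_div_gcd hd0).dvd_of_dvd_mul_left h2
  obtain ⟨K, hK⟩ := key
  have hc1m : c 1 = (((K : ℤ) * (((2*e+1)/Nat.gcd (2*e+1) t : ℕ) : ℤ) : ℤ) : ZMod q) := by
    have h1 : c 1 = (((c 1).val : ℕ) : ZMod q) := by rw [ZMod.natCast_val, ZMod.cast_id]
    rw [h1, hK,
      show ((K : ℤ) * (((2*e+1)/Nat.gcd (2*e+1) t : ℕ) : ℤ) : ℤ)
          = (((2*e+1)/Nat.gcd (2*e+1) t * K : ℕ) : ℤ) from by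
        rw [mul_comm]; exact (Nat.cast_mul _ _).symm,
      Int.cast_natCast]
  -- conclude
  have hLCC : LCcode q e t (K : ℤ) ≤ C := by
    rw [LCcode]
    apply (AddSubgroup.closure_le C).mpr
    rintro y hy
    rcases hy with hy | hy
    · have : y = c := by
        rw [hy]
        funext i
        fin_cases i
        · simpa using hc0m.symm
        · simpa using hc1m.symm
      rw [this]; exact hcC
    · rw [Set.mem_singleton_iff] at hy
      rw [hy]; exact h0m
  refine ⟨(K : ℤ), le_antisymm ?_ hLCC⟩
  intro y hy
  obtain ⟨z, ⟨hzLC, hzd⟩, -⟩ := LC_perfect ht hq (K : ℤ) y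
  obtain ⟨u, -, huniq⟩ := hP y
  have h1 := huniq y ⟨hy, maxDist_self_le y e⟩
  have h2 := huniq z ⟨hLCC hzLC, hzd⟩
  rw [h1.trans h2.symm]
  exact hzLC

end Classify

section EqIff

variable {e t q : ℕ}

lemma LC_le_aux [NeZero q] (k1 k2 j : ℤ)
    (hj : k1 = k2 + ((Nat.gcd (2*e+1) t : ℕ) : ℤ) * j) :
    LCcode q e t k1 ≤ LCcode q e t k2 := by
  have hmd : Nat.gcd (2*e+1) t ∣ 2*e+1 := Nat.gcd_dvd_left _ _
  have hdh : ((Nat.gcd (2*e+1) t : ℕ) : ℤ) * (((2*e+1)/Nat.gcd (2*e+1) t : ℕ) : ℤ)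
      = (2*(e:ℤ)+1) := by exact_mod_cast Nat.mul_div_cancel' hmd
  intro x hx
  obtain ⟨a, b, h0, h1⟩ := mem_LCcode.mp hx
  refine mem_LCcode.mpr ⟨a, b + a*j, h0, ?_⟩
  rw [h1]
  congr 1
  rw [hj, ← hdh]
  ring

lemma LC_eq_iff (ht : 2 ≤ t) (hq : q = (2*e+1)*t) [NeZero q] (k1 k2 : ℤ) :
    LCcode q e t k1 = LCcode q e t k2 ↔
      ((Nat.gcd (2*e+1) t : ℕ) : ℤ) ∣ (k2 - k1) := by
  have hmd : Nat.gcd (2*e+1) t ∣ 2*e+1 := Nat.gcd_dvd_left _ _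
  have hd0 : 0 < Nat.gcd (2*e+1) t := Nat.gcd_pos_of_pos_left t (by omega)
  have hH0 : 0 < (2*e+1)/Nat.gcd (2*e+1) t :=
    Nat.div_pos (Nat.le_of_dvd (by omega) hmd) hd0
  have hdh : ((Nat.gcd (2*e+1) t : ℕ) : ℤ) * (((2*e+1)/Nat.gcd (2*e+1) t : ℕ) : ℤ)
      = (2*(e:ℤ)+1) := by exact_mod_cast Nat.mul_div_cancel' hmd
  constructor
  · intro h
    have hg1 : (![((2*e+1 : ℕ) : ZMod q),
        ((k1 * (((2*e+1)/Nat.gcd (2*e+1) t : ℕ) : ℤ) : ℤ) : ZMod q)] : Fin 2 → ZMod q)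
        ∈ LCcode q e t k1 := by
      refine mem_LCcode.mpr ⟨1, 0, ?_, ?_⟩
      · simp
      · simp
    rw [h] at hg1
    obtain ⟨a, b, h0, h1⟩ := mem_LCcode.mp hg1
    simp only [Matrix.cons_val_zero, Matrix.cons_val_one, Matrix.head_cons] at h0 h1
    -- from h0 : t ∣ a - 1
    have hq1 : ((q : ℕ) : ℤ) ∣ (a * (2*e+1) - (2*e+1)) := by
      have : ((a * (2*e+1) - (2*e+1) : ℤ) : ZMod q) = 0 := by
        push_cast
        push_cast at h0
        rw [← h0]; ring
      exact_mod_cast (ZMod.intCast_zmod_eq_zero_iff_dvd _ q).mp this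
    have hta : (t:ℤ) ∣ (a - 1) := by
      have hqz : ((q : ℕ) : ℤ) = (2*(e:ℤ)+1) * (t : ℤ) := by
        rw [hq]; push_cast; ring
      rw [hqz] at hq1
      have h' : (2*(e:ℤ)+1) * (t:ℤ) ∣ (2*(e:ℤ)+1) * (a - 1) := by
        have : a * (2*e+1) - (2*e+1) = (2*(e:ℤ)+1) * (a - 1) := by ring
        rwa [this] at hq1
      exact (mul_dvd_mul_iff_left (by positivity : (2*(e:ℤ)+1) ≠ 0)).mp h'
    obtain ⟨a', ha'⟩ := hta
    -- from h1
    have hq2 : ((q : ℕ) : ℤ) ∣ (a * (k2 * (((2*e+1)/Nat.gcd (2*e+1) t : ℕ) : ℤ)) + b * (2*e+1)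
        - k1 * (((2*e+1)/Nat.gcd (2*e+1) t : ℕ) : ℤ)) := by
      have : ((a * (k2 * (((2*e+1)/Nat.gcd (2*e+1) t : ℕ) : ℤ)) + b * (2*e+1)
          - k1 * (((2*e+1)/Nat.gcd (2*e+1) t : ℕ) : ℤ) : ℤ) : ZMod q) = 0 := by
        push_cast
        push_cast at h1
        rw [← h1]; ring
      exact_mod_cast (ZMod.intCast_zmod_eq_zero_iff_dvd _ q).mp this
    have hth : ((t * ((2*e+1) / Nat.gcd (2*e+1) t) : ℕ) : ℤ)
        = (((2*e+1) * (t / Nat.gcd (2*e+1) t) : ℕ) : ℤ) := by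
      exact_mod_cast congrArg (Nat.cast : ℕ → ℤ) (gcd_identity (2*e+1) t)
    have hmdvd : (2*(e:ℤ)+1) ∣ ((k2 - k1) * (((2*e+1)/Nat.gcd (2*e+1) t : ℕ) : ℤ)) := by
      have hmq : (2*(e:ℤ)+1) ∣ ((q : ℕ) : ℤ) := ⟨t, by rw [hq]; push_cast; ring⟩
      have h3 : (2*(e:ℤ)+1) ∣ (a * (k2 * (((2*e+1)/Nat.gcd (2*e+1) t : ℕ) : ℤ)) + b * (2*e+1)
          - k1 * (((2*e+1)/Nat.gcd (2*e+1) t : ℕ) : ℤ)) := dvd_trans hmq hq2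
      -- rewrite : a = 1 + t*a'
      have ha : a = 1 + (t:ℤ) * a' := by omega
      have hsplit : (a * (k2 * (((2*e+1)/Nat.gcd (2*e+1) t : ℕ) : ℤ)) + b * (2*e+1)
          - k1 * (((2*e+1)/Nat.gcd (2*e+1) t : ℕ) : ℤ))
          = (k2 - k1) * (((2*e+1)/Nat.gcd (2*e+1) t : ℕ) : ℤ)
            + a' * k2 * ((t * ((2*e+1) / Nat.gcd (2*e+1) t) : ℕ) : ℤ)
            + b * (2*e+1) := by
        rw [ha]; push_cast; ring
      rw [hsplit, hth] at h3
      have h4 : (2*(e:ℤ)+1) ∣ a' * k2 * (((2*e+1) * (t / Nat.gcd (2*e+1) t) : ℕ) : ℤ)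
          + b * (2*e+1) :=
        ⟨a' * k2 * ((t / Nat.gcd (2*e+1) t : ℕ) : ℤ) + b, by push_cast; ring⟩
      have h5 := dvd_sub h3 h4
      rwa [add_assoc, add_sub_cancel_right] at h5
    -- cancel h
    rw [← hdh] at hmdvd
    exact (mul_dvd_mul_iff_right
      (by exact_mod_cast hH0.ne' :
        (((2*e+1)/Nat.gcd (2*e+1) t : ℕ) : ℤ) ≠ 0)).mp hmdvd
  · intro hdvd
    obtain ⟨j, hj⟩ := hdvd
    apply le_antisymm
    · exact LC_le_aux k1 k2 (-j) (by rw [show k1 = k2 - (k2 - k1) by ring, hj]; ring)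
    · exact LC_le_aux k2 k1 j (by rw [show k2 = k1 + (k2 - k1) by ring, hj])

end EqIff

lemma LC_type2 {e t q : ℕ} (k : ℤ) :
    IsTypeCode e ((LCcode q e t k : AddSubgroup (Fin 2 → ZMod q)) : Set (Fin 2 → ZMod q)) 1 := by
  intro c hc
  have hgen : (![(0 : ZMod q), ((2*e+1 : ℕ) : ZMod q)] : Fin 2 → ZMod q) ∈ LCcode q e t k := by
    refine mem_LCcode.mpr ⟨0, 1, ?_, ?_⟩
    · simp
    · simp
  have := AddSubgroup.add_mem (LCcode q e t k) hc hgen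
  rwa [single_eq]


/-- Parametrization of two-dimensional linear perfect codes of type 2 by `ZMod d1`:
`k ↦ LC_q(e,k)` is onto such codes, `LC_q(e,k1) = LC_q(e,k2) ↔ k1 ≡ k2 (mod d1)`,
and there are exactly `d1 = gcd(2e+1,t)` such codes. -/
theorem stmt9 (e t q : ℕ) (ht : 2 ≤ t) (hq : q = (2 * e + 1) * t) :
    (Set.range (fun k : ℤ => LCcode q e t k) =
      {C : AddSubgroup (Fin 2 → ZMod q) |
        IsPerfectCode e (C : Set (Fin 2 → ZMod q)) ∧
        IsTypeCode e (C : Set (Fin 2 → ZMod q)) 1}) ∧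
    (∀ k1 k2 : ℤ, LCcode q e t k1 = LCcode q e t k2 ↔
      k1 ≡ k2 [ZMOD (Nat.gcd (2 * e + 1) t : ℤ)]) ∧
    {C : AddSubgroup (Fin 2 → ZMod q) |
        IsPerfectCode e (C : Set (Fin 2 → ZMod q)) ∧
        IsTypeCode e (C : Set (Fin 2 → ZMod q)) 1}.ncard =
      Nat.gcd (2 * e + 1) t := by
  haveI : NeZero q := ⟨by
    have : 0 < (2*e+1)*t := Nat.mul_pos (by omega) (by omega)
    omega⟩
  have hd0 : 0 < Nat.gcd (2*e+1) t := Nat.gcd_pos_of_pos_left t (by omega)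
  haveI : NeZero (Nat.gcd (2*e+1) t) := ⟨by omega⟩
  have hpart1 : Set.range (fun k : ℤ => LCcode q e t k) =
      {C : AddSubgroup (Fin 2 → ZMod q) |
        IsPerfectCode e (C : Set (Fin 2 → ZMod q)) ∧
        IsTypeCode e (C : Set (Fin 2 → ZMod q)) 1} := by
    ext C
    constructor
    · rintro ⟨k, rfl⟩
      exact ⟨LC_perfect ht hq k, LC_type2 k⟩
    · rintro ⟨hP, hT⟩
      obtain ⟨k, hk⟩ := classify ht hq C hP hT
      exact ⟨k, hk.symm⟩
  have hpart2 : ∀ k1 k2 : ℤ, LCcode q e t k1 = LCcode q e t k2 ↔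
      k1 ≡ k2 [ZMOD (Nat.gcd (2 * e + 1) t : ℤ)] := by
    intro k1 k2
    rw [LC_eq_iff ht hq k1 k2]
    exact Int.modEq_iff_dvd.symm
  refine ⟨hpart1, hpart2, ?_⟩
  rw [← hpart1]
  set D := Nat.gcd (2*e+1) t with hD
  set F : ZMod D → AddSubgroup (Fin 2 → ZMod q) := fun z => LCcode q e t (z.val : ℤ) with hF
  have hFinj : Function.Injective F := by
    intro z1 z2 hz
    have hdvd : ((D : ℕ) : ℤ) ∣ ((z2.val : ℤ) - (z1.val : ℤ)) := (LC_eq_iff ht hq _ _).mp hz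
    have h1 := ZMod.val_lt z1
    have h2 := ZMod.val_lt z2
    have habs : |((z2.val : ℤ) - (z1.val : ℤ))| < (D : ℤ) := abs_lt.mpr ⟨by omega, by omega⟩
    have hzero : ((z2.val : ℤ) - (z1.val : ℤ)) = 0 := Int.eq_zero_of_abs_lt_dvd hdvd habs
    have hval : z1.val = z2.val := by omega
    calc z1 = ((z1.val : ℕ) : ZMod D) := by rw [ZMod.natCast_val, ZMod.cast_id]
    _ = ((z2.val : ℕ) : ZMod D) := by rw [hval]
    _ = z2 := by rw [ZMod.natCast_val, ZMod.cast_id]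
  have hrange : Set.range (fun k : ℤ => LCcode q e t k) = Set.range F := by
    ext S
    constructor
    · rintro ⟨k, rfl⟩
      refine ⟨(k : ZMod D), ?_⟩
      show LCcode q e t (((k : ZMod D).val : ℕ) : ℤ) = LCcode q e t k
      rw [LC_eq_iff ht hq]
      have hcast : ((k - (((k : ZMod D).val : ℕ) : ℤ) : ℤ) : ZMod D) = 0 := by
        push_cast [ZMod.natCast_val, ZMod.intCast_cast, ZMod.cast_id]
        ring
      exact (ZMod.intCast_zmod_eq_zero_iff_dvd _ D).mp hcast
    · rintro ⟨z, rfl⟩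
      exact ⟨(z.val : ℤ), rfl⟩
  rw [hrange, ← Set.image_univ, Set.ncard_image_of_injective _ hFinj, Set.ncard_univ,
    Nat.card_zmod]
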